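/- Fix x̄ ∈ ℝ and p̄ ≥ 0, and set c = (∫₀¹ σ(x̄,y)/τ(y) dy) / (∫₀¹ 1/τ(y) dy) and H̄ = c² p̄². Then the function w(y) = ∫₀^y (c p̄ − σ(x̄,s) p̄)/τ(s) ds is of class C¹, is 1-periodic, and satisfies (τ(y) w′(y) + σ(x̄,y) p̄)² = H̄ for every y ∈ ℝ. Consequently, in the one-dimensional subcritical case the effective Hamiltonian is H̄(x̄, p̄) = (∫₀¹ σ(x̄,y)/τ(y) dy)² (∫₀¹ 1/τ(y) dy)^{−2} p̄². -/

import Mathlib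

open MeasureTheory intervalIntegral

/-- explicit formula for the effective Hamiltonian in the one-dimensional
subcritical case: the explicit corrector `w` is `C¹`, 1-periodic and solves the cell
problem with value `H̄(x̄,p̄) = (∫₀¹ σ/τ)² (∫₀¹ 1/τ)⁻² p̄²`. -/
theorem stmt12 (σ : ℝ → ℝ → ℝ) (τ : ℝ → ℝ)
    (hσc : Continuous fun q : ℝ × ℝ => σ q.1 q.2)
    (hσper : ∀ x y, σ x (y + 1) = σ x y)
    (hσpos : ∀ x y, 0 ≤ σ x y)
    (hτc : Continuous τ)
    (hτper : ∀ y, τ (y + 1) = τ y)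
    (θ : ℝ) (hθ : 0 < θ) (hτθ : ∀ y, θ ≤ τ y)
    (xbar pbar : ℝ) (hp : 0 ≤ pbar)
    (c : ℝ)
    (hc : c = (∫ y in (0:ℝ)..1, σ xbar y / τ y) / (∫ y in (0:ℝ)..1, 1 / τ y))
    (w : ℝ → ℝ)
    (hw : ∀ y, w y = ∫ s in (0:ℝ)..y, (c * pbar - σ xbar s * pbar) / τ s) :
    ContDiff ℝ 1 w ∧
    (∀ y, w (y + 1) = w y) ∧
    (∀ y, (τ y * deriv w y + σ xbar y * pbar) ^ 2 = c ^ 2 * pbar ^ 2) ∧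
    c ^ 2 * pbar ^ 2 =
      (∫ y in (0:ℝ)..1, σ xbar y / τ y) ^ 2 *
        ((∫ y in (0:ℝ)..1, 1 / τ y)⁻¹) ^ 2 * pbar ^ 2 := by
  have hτpos : ∀ y, 0 < τ y := fun y => lt_of_lt_of_le hθ (hτθ y)
  have hτne : ∀ y, τ y ≠ 0 := fun y => (hτpos y).ne'
  have hσx : Continuous fun y => σ xbar y :=
    hσc.comp (continuous_const.prodMk continuous_id)
  set f : ℝ → ℝ := fun s => (c * pbar - σ xbar s * pbar) / τ s with hf
  have hfc : Continuous f :=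
    (continuous_const.sub (hσx.mul continuous_const)).div hτc hτne
  have hweq : w = fun u => ∫ s in (0:ℝ)..u, f s := funext hw
  have hderiv : ∀ y, HasDerivAt w (f y) y := by
    intro y
    rw [hweq]
    exact (hfc.integral_hasStrictDerivAt 0 y).hasDerivAt
  have hderiv' : ∀ y, deriv w y = f y := fun y => (hderiv y).deriv
  -- positivity of ∫ 1/τ
  have hBpos : 0 < ∫ y in (0:ℝ)..1, 1 / τ y := by
    apply intervalIntegral.intervalIntegral_pos_of_pos_on
    · exact ((continuous_const.div hτc hτne).intervalIntegrable 0 1)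
    · intro x _
      exact div_pos one_pos (hτpos x)
    · norm_num
  have hcB : c * (∫ y in (0:ℝ)..1, 1 / τ y) = ∫ y in (0:ℝ)..1, σ xbar y / τ y := by
    rw [hc, div_mul_cancel₀ _ hBpos.ne']
  -- integral of f over a period is zero
  have hint0 : (∫ s in (0:ℝ)..1, f s) = 0 := by
    have h1 : IntervalIntegrable (fun s => c * pbar * (1 / τ s)) volume 0 1 :=
      ((continuous_const.mul (continuous_const.div hτc hτne)).intervalIntegrable 0 1)
    have h2 : IntervalIntegrable (fun s => pbar * (σ xbar s / τ s)) volume 0 1 :=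
      ((continuous_const.mul (hσx.div hτc hτne)).intervalIntegrable 0 1)
    have : (∫ s in (0:ℝ)..1, f s)
        = ∫ s in (0:ℝ)..1, (c * pbar * (1 / τ s) - pbar * (σ xbar s / τ s)) := by
      apply intervalIntegral.integral_congr
      intro s _
      simp only [hf]
      field_simp
    rw [this, intervalIntegral.integral_sub h1 h2,
      intervalIntegral.integral_const_mul, intervalIntegral.integral_const_mul]
    nlinarith [hcB]
  have hfper : Function.Periodic f 1 := by
    intro s
    simp only [hf, hσper, hτper]
  refine ⟨?_, ?_, ?_, ?_⟩
  · rw [contDiff_one_iff_deriv]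
    refine ⟨fun y => (hderiv y).differentiableAt, ?_⟩
    have : deriv w = f := funext hderiv'
    rw [this]; exact hfc
  · intro y
    have hadd : (∫ s in (0:ℝ)..y, f s) + (∫ s in y..(y+1), f s)
        = ∫ s in (0:ℝ)..(y+1), f s :=
      intervalIntegral.integral_add_adjacent_intervals
        (hfc.intervalIntegrable 0 y) (hfc.intervalIntegrable y (y+1))
    have hper : (∫ s in y..(y+1), f s) = ∫ s in (0:ℝ)..(0+1:ℝ), f s :=
      hfper.intervalIntegral_add_eq y 0
    rw [hweq]
    simp only
    rw [← hadd, hper]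
    simp [hint0]
  · intro y
    rw [hderiv' y]
    have : τ y * f y + σ xbar y * pbar = c * pbar := by
      simp only [hf]
      rw [mul_div_assoc', mul_div_cancel_left₀ _ (hτne y)]
      ring
    rw [this]; ring
  · rw [hc, div_pow, ← mul_pow]
    congr 1
    rw [div_eq_mul_inv, mul_pow, inv_pow]
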